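/- Let $w \in S_n$, let $\mathbf{w} = s_{i_1}\cdots s_{i_m}$ be a reduced word for $w$, and let $u \le w$. Then there exists a unique positive distinguished subexpression (PDS) for $u$ in $\mathbf{w}$. -/

import Mathlib

/-- Coxeter length of a permutation of `Fin n`: the number of inversions. -/
def len {n : ℕ} (u : Equiv.Perm (Fin n)) : ℕ :=
  (Finset.univ.filter fun p : Fin n × Fin n => p.1 < p.2 ∧ u p.2 < u p.1).card

/-- `w` covers `u` in the strong Bruhat order: `w = u·t` for a transposition `t`
and `ℓ(w) = ℓ(u) + 1`. -/
def BruhatCover {n : ℕ} (u w : Equiv.Perm (Fin n)) : Prop :=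
  (∃ i j : Fin n, i ≠ j ∧ w = u * Equiv.swap i j) ∧ len w = len u + 1

/-- The strong Bruhat order on `S_n`. -/
def BruhatLE {n : ℕ} (u w : Equiv.Perm (Fin n)) : Prop :=
  Relation.ReflTransGen BruhatCover u w

/-- The image `u({1,…,k})`, zero-indexed as `u({i : i.val < k})`. -/
def kImage {n : ℕ} (k : ℕ) (u : Equiv.Perm (Fin n)) : Finset (Fin n) :=
  (Finset.univ.filter fun i : Fin n => i.val < k).image u

/-- `w` is a `k`-cover of `u`: a Bruhat cover with `w({1,…,k}) ≠ u({1,…,k})`. -/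
def KBruhatCover {n : ℕ} (k : ℕ) (u w : Equiv.Perm (Fin n)) : Prop :=
  BruhatCover u w ∧ kImage k u ≠ kImage k w

/-- The `k`-Bruhat order on `S_n`: transitive closure of `k`-covers. -/
def KBruhatLE {n : ℕ} (k : ℕ) (u w : Equiv.Perm (Fin n)) : Prop :=
  Relation.ReflTransGen (KBruhatCover k) u w

/-- `z` lies in the Young subgroup `S_k × S_{n-k}`, i.e. `z` fixes the sets
`{1,…,k}` and `{k+1,…,n}` setwise. -/
def IsYoung {n : ℕ} (k : ℕ) (z : Equiv.Perm (Fin n)) : Prop :=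
  ∀ i : Fin n, (z i).val < k ↔ i.val < k

/-- `u` is anti-Grassmannian of type `(k,n)`: decreasing on `{1,…,k}` and on
`{k+1,…,n}` (zero-indexed: on `val < k` and on `k ≤ val`). -/
def AntiGrass {n : ℕ} (k : ℕ) (u : Equiv.Perm (Fin n)) : Prop :=
  (∀ a b : Fin n, a < b → b.val < k → u b < u a) ∧
  (∀ a b : Fin n, a < b → k ≤ a.val → u b < u a)

/-- The simple transposition `s_i` swapping the (zero-indexed) positions `i`
and `i+1`; junk value `1` when `i+1 ≥ n`. -/
def simpleRefl {n : ℕ} (i : ℕ) : Equiv.Perm (Fin n) :=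
  if h : i + 1 < n then Equiv.swap ⟨i, Nat.lt_of_succ_lt h⟩ ⟨i + 1, h⟩ else 1

/-- The product of the word of simple reflections `s_{i_1} ⋯ s_{i_m}` given by
the list `l = [i_1, …, i_m]`. -/
def wordProd {n : ℕ} (l : List ℕ) : Equiv.Perm (Fin n) :=
  (l.map (simpleRefl (n := n))).prod

/-- The product of the subexpression of the word `l` selected by the Boolean
mask `m`: omitted factors are replaced by the identity. -/
def maskProd {n : ℕ} (l : List ℕ) (m : List Bool) : Equiv.Perm (Fin n) :=
  ((l.zip m).map fun p => if p.2 then simpleRefl (n := n) p.1 else 1).prod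

/-- The mask `m` defines a positive distinguished subexpression of the word `l`:
for every position `j`, writing `u_{(j)}` for the product of the first `j`
factors of the subexpression, one has `u_{(j-1)} < u_{(j-1)}·s_{i_j}` in Bruhat
order, i.e. right multiplication by `s_{i_j}` increases length.  (Combined with
distinguishedness `u_{(j)} ≤ u_{(j-1)} s_{i_j}`, which then holds automatically,
this is exactly the definition of a PDS.) -/
def IsPDS {n : ℕ} (l : List ℕ) (m : List Bool) : Prop :=
  m.length = l.length ∧
  ∀ j : ℕ, j < l.length →
    len ((maskProd (n := n) (l.take j) (m.take j)) * simpleRefl (l.getD j 0)) =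
      len (maskProd (n := n) (l.take j) (m.take j)) + 1

namespace PDSAux
open Equiv Finset
variable {n : ℕ}

lemma len_def (u : Equiv.Perm (Fin n)) :
    len u = (Finset.univ.filter fun p : Fin n × Fin n => p.1 < p.2 ∧ u p.2 < u p.1).card := rfl

lemma len_one : len (1 : Equiv.Perm (Fin n)) = 0 := by
  rw [len_def, Finset.card_eq_zero]
  refine Finset.ext fun p => ?_
  rw [Finset.mem_filter]
  simp only [Finset.mem_filter, Finset.mem_univ, true_and, Finset.notMem_empty, iff_false,
    Equiv.Perm.one_apply, not_and, not_lt]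
  exact fun h => h.le

lemma swap_val {i : ℕ} (h : i + 1 < n) (x : Fin n) :
    (Equiv.swap ⟨i, Nat.lt_of_succ_lt h⟩ ⟨i+1, h⟩ x).val =
      if x.val = i then i+1 else if x.val = i+1 then i else x.val := by
  simp only [Equiv.swap_apply_def]
  split_ifs with h1 h2 h3 h4 <;> simp_all [Fin.ext_iff]

lemma adj_swap_lt {i : ℕ} (h : i + 1 < n) {p q : Fin n} (hpq : p < q)
    (hne : ¬(p = ⟨i, Nat.lt_of_succ_lt h⟩ ∧ q = ⟨i+1, h⟩)) :
    Equiv.swap ⟨i, Nat.lt_of_succ_lt h⟩ ⟨i+1, h⟩ p < Equiv.swap ⟨i, Nat.lt_of_succ_lt h⟩ ⟨i+1, h⟩ q := by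
  have hne' : ¬(p.val = i ∧ q.val = i+1) := by
    rintro ⟨h1, h2⟩; exact hne ⟨Fin.ext h1, Fin.ext h2⟩
  rw [Fin.lt_def] at hpq ⊢
  rw [swap_val h, swap_val h]
  split_ifs <;> omega

lemma len_mul_adj {u : Equiv.Perm (Fin n)} {i : ℕ} (h : i + 1 < n)
    (hlt : u ⟨i, Nat.lt_of_succ_lt h⟩ < u ⟨i+1, h⟩) :
    len (u * Equiv.swap ⟨i, Nat.lt_of_succ_lt h⟩ ⟨i+1, h⟩) = len u + 1 := by
  have ha : (⟨i, Nat.lt_of_succ_lt h⟩ : Fin n) < ⟨i+1, h⟩ := by simp [Fin.lt_def]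
  set a : Fin n := ⟨i, Nat.lt_of_succ_lt h⟩
  set b : Fin n := ⟨i+1, h⟩
  have hinj : Function.Injective (fun p : Fin n × Fin n =>
      (Equiv.swap a b p.1, Equiv.swap a b p.2)) := fun x y hxy => by
    simp only [Prod.mk.injEq] at hxy
    exact Prod.ext ((Equiv.swap a b).injective hxy.1) ((Equiv.swap a b).injective hxy.2)
  have key : (Finset.univ.filter fun p : Fin n × Fin n =>
        p.1 < p.2 ∧ (u * Equiv.swap a b) p.2 < (u * Equiv.swap a b) p.1)
      = insert (a, b)
        ((Finset.univ.filter fun p : Fin n × Fin n => p.1 < p.2 ∧ u p.2 < u p.1).image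
          fun p => (Equiv.swap a b p.1, Equiv.swap a b p.2)) := by
    refine Finset.ext fun x => ?_; obtain ⟨p, q⟩ := x
    rw [Finset.mem_filter]
    simp only [Finset.mem_insert, Finset.mem_image, Finset.mem_filter, Finset.mem_univ,
      true_and, Equiv.Perm.mul_apply, Prod.mk.injEq, Prod.exists]
    constructor
    · rintro ⟨hpq, hinv⟩
      by_cases hc : p = a ∧ q = b
      · exact Or.inl hc
      · exact Or.inr ⟨Equiv.swap a b p, Equiv.swap a b q,
          ⟨adj_swap_lt h hpq hc, by simpa using hinv⟩, by simp, by simp⟩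
    · rintro (⟨rfl, rfl⟩ | ⟨p', q', ⟨hpq', hinv'⟩, rfl, rfl⟩)
      · exact ⟨ha, by simpa using hlt⟩
      · have hne : ¬(p' = a ∧ q' = b) := by
          rintro ⟨rfl, rfl⟩; exact absurd hinv' (not_lt.2 hlt.le)
        exact ⟨adj_swap_lt h hpq' hne, by simpa using hinv'⟩
  have hnotmem : (a, b) ∉ ((Finset.univ.filter fun p : Fin n × Fin n =>
      p.1 < p.2 ∧ u p.2 < u p.1).image fun p => (Equiv.swap a b p.1, Equiv.swap a b p.2)) := by
    simp only [Finset.mem_image, Finset.mem_filter, Finset.mem_univ, true_and, Prod.exists,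
      Prod.mk.injEq]
    rintro ⟨p', q', ⟨hpq', -⟩, hp', hq'⟩
    have hp2 : p' = b := by
      have := congrArg (Equiv.swap a b) hp'; simpa using this
    have hq2 : q' = a := by
      have := congrArg (Equiv.swap a b) hq'; simpa using this
    rw [hp2, hq2] at hpq'
    exact absurd hpq' (not_lt.2 ha.le)
  rw [len_def, key, Finset.card_insert_of_notMem hnotmem,
    Finset.card_image_of_injective _ hinj, ← len_def, Nat.add_comm]

lemma len_mul_adj' {u : Equiv.Perm (Fin n)} {a b : Fin n} (hv : b.val = a.val + 1)
    (hlt : u a < u b) : len (u * Equiv.swap a b) = len u + 1 := by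
  have h : a.val + 1 < n := hv ▸ b.isLt
  have ha : a = ⟨a.val, Nat.lt_of_succ_lt h⟩ := Fin.ext rfl
  have hb : b = ⟨a.val + 1, h⟩ := Fin.ext hv
  rw [ha, hb] at hlt ⊢
  exact len_mul_adj h hlt

lemma len_mul_adj_cases (u : Equiv.Perm (Fin n)) {a b : Fin n} (hv : b.val = a.val + 1) :
    (u a < u b ∧ len (u * Equiv.swap a b) = len u + 1) ∨
    (u b < u a ∧ len u = len (u * Equiv.swap a b) + 1) := by
  have hab : a ≠ b := by intro h; rw [h] at hv; omega
  rcases lt_or_gt_of_ne (fun h => hab (u.injective h) : u a ≠ u b) with hlt | hgt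
  · exact Or.inl ⟨hlt, len_mul_adj' hv hlt⟩
  · refine Or.inr ⟨hgt, ?_⟩
    have h2 : (u * Equiv.swap a b) a < (u * Equiv.swap a b) b := by
      simpa using hgt
    have := len_mul_adj' hv h2
    rwa [mul_assoc, Equiv.swap_mul_self, mul_one] at this

lemma len_lt_mul_swap : ∀ k, ∀ (u : Equiv.Perm (Fin n)) (a b : Fin n),
    b.val - a.val = k → a < b → u a < u b → len u < len (u * Equiv.swap a b) := by
  intro k
  induction k using Nat.strong_induction_on with
  | _ k IH =>
    intro u a b hk hab hlt
    have hab' : a.val < b.val := hab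
    by_cases hadj : b.val = a.val + 1
    · rw [len_mul_adj' hadj hlt]; omega
    · -- b.val ≥ a.val + 2
      have hb1 : 1 ≤ b.val := by omega
      set b' : Fin n := ⟨b.val - 1, Nat.lt_of_le_of_lt (Nat.sub_le _ _) b.isLt⟩ with hb'
      have hvb : b.val = b'.val + 1 := by simp [hb']; omega
      have hab'2 : a < b' := by rw [Fin.lt_def]; simp [hb']; omega
      have hane : a ≠ b' := Fin.ne_of_lt hab'2
      have hane2 : a ≠ b := Fin.ne_of_lt hab
      set s := Equiv.swap b' b with hs
      have hsa : s a = a := Equiv.swap_apply_of_ne_of_ne hane hane2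
      have hsb' : s b' = b := Equiv.swap_apply_left _ _
      have hsb : s b = b' := Equiv.swap_apply_right _ _
      set w1 := u * s with hw1
      have hw1a : w1 a = u a := by simp [hw1, hsa]
      have hw1b' : w1 b' = u b := by simp [hw1, hsb']
      have hw1b : w1 b = u b' := by simp [hw1, hsb]
      set w2 := w1 * Equiv.swap a b' with hw2
      have hgap : b'.val - a.val < k := by omega
      have hIH : len w1 < len w2 := by
        refine IH _ hgap w1 a b' rfl hab'2 ?_
        rw [hw1a, hw1b']
        exact hlt.trans_le (le_refl _) |>.trans_le (le_refl _)
      have hconj : Equiv.swap a b = s * Equiv.swap a b' * s := by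
        have := Equiv.swap_apply_apply s a b'
        rw [hsa, hsb'] at this
        rw [this, Equiv.swap_inv (α := Fin n)]
      have hfinal : u * Equiv.swap a b = w2 * s := by
        rw [hconj, hw2, hw1]; group
      have hw2b' : w2 b' = u a := by simp [hw2, hw1a]
      have hw2b : w2 b = u b' := by
        have : Equiv.swap a b' b = b := Equiv.swap_apply_of_ne_of_ne (Fin.ne_of_gt hab) (Fin.ne_of_gt (by rw [Fin.lt_def]; omega))
        simp [hw2, this, hw1b]
      have hune : u b' ≠ u b := fun h => (Fin.ne_of_lt (show b' < b by rw [Fin.lt_def]; omega)) (u.injective h)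
      rcases lt_or_gt_of_ne hune with hc1 | hc2
      · -- u b' < u b : len w1 = len u + 1
        have h1 : len w1 = len u + 1 := len_mul_adj' hvb hc1
        rcases len_mul_adj_cases w2 hvb with ⟨-, h2⟩ | ⟨-, h2⟩ <;> rw [hfinal, hs] <;> omega
      · -- u b < u b' : len u = len w1 + 1
        have h1 : len u = len w1 + 1 := by
          have h2 : w1 b' < w1 b := by rw [hw1b', hw1b]; exact hc2
          have := len_mul_adj' hvb h2
          rwa [hw1, mul_assoc, hs, Equiv.swap_mul_self, mul_one] at this
        have h3 : w2 b' < w2 b := by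
          rw [hw2b', hw2b]; exact hlt.trans hc2
        have h4 : len (w2 * s) = len w2 + 1 := len_mul_adj' hvb h3
        rw [hfinal]; omega

lemma lt_of_len_mul_swap_lt {u : Equiv.Perm (Fin n)} {a b : Fin n} (hab : a < b)
    (hlen : len (u * Equiv.swap a b) < len u) : u b < u a := by
  rcases lt_or_gt_of_ne (fun h => (Fin.ne_of_lt hab) (u.injective h) : u a ≠ u b) with h | h
  · exact absurd (len_lt_mul_swap _ u a b rfl hab h) (by omega)
  · exact h

lemma simpleRefl_valid {i : ℕ} (h : i + 1 < n) :
    simpleRefl (n := n) i = Equiv.swap ⟨i, Nat.lt_of_succ_lt h⟩ ⟨i+1, h⟩ := dif_pos h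

lemma simpleRefl_invalid {i : ℕ} (h : ¬ i + 1 < n) : simpleRefl (n := n) i = 1 := dif_neg h

lemma simpleRefl_mul_self (i : ℕ) : simpleRefl (n := n) i * simpleRefl i = 1 := by
  by_cases h : i + 1 < n
  · rw [simpleRefl_valid h, Equiv.swap_mul_self]
  · rw [simpleRefl_invalid h, mul_one]

lemma len_mul_simpleRefl_cases (u : Equiv.Perm (Fin n)) {i : ℕ} (h : i + 1 < n) :
    (u ⟨i, Nat.lt_of_succ_lt h⟩ < u ⟨i+1, h⟩ ∧ len (u * simpleRefl i) = len u + 1) ∨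
    (u ⟨i+1, h⟩ < u ⟨i, Nat.lt_of_succ_lt h⟩ ∧ len u = len (u * simpleRefl i) + 1) := by
  rw [simpleRefl_valid h]
  exact len_mul_adj_cases u rfl

lemma len_mul_simpleRefl_le (u : Equiv.Perm (Fin n)) (i : ℕ) :
    len (u * simpleRefl i) ≤ len u + 1 := by
  by_cases h : i + 1 < n
  · rcases len_mul_simpleRefl_cases u h with ⟨-, h2⟩ | ⟨-, h2⟩ <;> omega
  · rw [simpleRefl_invalid h, mul_one]; omega

lemma len_mul_simpleRefl_ne (u : Equiv.Perm (Fin n)) {i : ℕ} (h : i + 1 < n) :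
    len (u * simpleRefl i) ≠ len u := by
  rcases len_mul_simpleRefl_cases u h with ⟨-, h2⟩ | ⟨-, h2⟩ <;> omega

open Equiv Finset
variable {n : ℕ}

lemma maskProd_nil (m : List Bool) : maskProd (n := n) [] m = 1 := rfl

lemma maskProd_cons (i : ℕ) (l : List ℕ) (c : Bool) (m : List Bool) :
    maskProd (n := n) (i :: l) (c :: m) =
      (if c then simpleRefl i else 1) * maskProd l m := by
  simp [maskProd, List.zip_cons_cons]

lemma maskProd_append {l1 l2 : List ℕ} {m1 m2 : List Bool} (h : m1.length = l1.length) :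
    maskProd (n := n) (l1 ++ l2) (m1 ++ m2) = maskProd l1 m1 * maskProd l2 m2 := by
  rw [maskProd, maskProd, maskProd, List.zip_append h.symm, List.map_append, List.prod_append]

lemma wordProd_eq_maskProd (l : List ℕ) :
    wordProd (n := n) l = maskProd l (List.replicate l.length true) := by
  induction l with
  | nil => rfl
  | cons i l IH =>
    rw [List.length_cons, List.replicate_succ, maskProd_cons, if_pos rfl, ← IH]
    rw [wordProd, List.map_cons, List.prod_cons, wordProd]

lemma cross {i : ℕ} (h : i + 1 < n) {x y : Fin n} (hxy : x < y)
    (hflip : Equiv.swap ⟨i, Nat.lt_of_succ_lt h⟩ ⟨i+1, h⟩ y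
      < Equiv.swap ⟨i, Nat.lt_of_succ_lt h⟩ ⟨i+1, h⟩ x) :
    x = ⟨i, Nat.lt_of_succ_lt h⟩ ∧ y = ⟨i+1, h⟩ := by
  have hx := swap_val h x
  have hy := swap_val h y
  rw [Fin.lt_def] at hxy hflip
  rw [hx, hy] at hflip
  constructor <;> apply Fin.ext <;> split_ifs at hflip <;> simp_all <;> omega

lemma exchange : ∀ (l : List ℕ) (m : List Bool), m.length = l.length →
    ∀ a b : Fin n, a < b → maskProd l m b < maskProd l m a →
    ∃ j < l.length, m.getD j false = true ∧
      maskProd l m * Equiv.swap a b = maskProd l (m.set j false) ∧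
      (m.set j false).count true + 1 = m.count true := by
  intro l
  induction l with
  | nil =>
    intro m _ a b hab hflip
    rw [maskProd_nil] at hflip
    simp at hflip
    exact absurd hflip (not_lt.2 hab.le)
  | cons i l IH =>
    intro m hlen a b hab hflip
    match m with
    | c :: m' =>
    have hlen' : m'.length = l.length := by simpa using hlen
    set v := maskProd (n := n) l m' with hv
    have hvab : v a ≠ v b := fun h => (Fin.ne_of_lt hab) (v.injective h)
    rw [maskProd_cons] at hflip
    rcases lt_or_gt_of_ne hvab with hva | hvb
    · -- v a < v b : crossing happens at the head, so c = true and head letter valid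
      have hc : c = true := by
        by_contra hc
        simp only [Bool.not_eq_true] at hc
        rw [hc, if_neg (by simp), one_mul] at hflip
        exact absurd hflip (not_lt.2 hva.le)
      subst hc
      rw [if_pos rfl] at hflip
      have hval : i + 1 < n := by
        by_contra hval
        rw [simpleRefl_invalid hval, one_mul] at hflip
        exact absurd hflip (not_lt.2 hva.le)
      rw [simpleRefl_valid hval] at hflip
      simp only [Equiv.Perm.mul_apply] at hflip
      obtain ⟨hx, hy⟩ := cross hval hva hflip
      have hs : simpleRefl (n := n) i = Equiv.swap (v a) (v b) := by
        rw [hx, hy, simpleRefl_valid hval]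
      refine ⟨0, by simp, rfl, ?_, by simp [List.count_cons]⟩
      rw [List.set_cons_zero, maskProd_cons, maskProd_cons, if_neg Bool.false_ne_true, one_mul,
        if_pos rfl, hs, Equiv.swap_apply_apply, ← hv]
      group
      exact mul_swap_mul_self a b v
    · -- v b < v a : recurse
      obtain ⟨j, hj, hjt, hprod, hcount⟩ := IH m' hlen' a b hab hvb
      refine ⟨j + 1, by simpa using hj, by simpa using hjt, ?_, ?_⟩
      · rw [List.set_cons_succ, maskProd_cons, maskProd_cons, mul_assoc, ← hv, hprod]
      · simp only [List.set_cons_succ, List.count_cons]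
        omega

lemma maskProd_singleton (i : ℕ) (b : Bool) :
    maskProd (n := n) [i] [b] = if b then simpleRefl i else 1 := by
  simp [maskProd]

lemma mask_split {l : List ℕ} {i : ℕ} {m : List Bool} (h : m.length = (l ++ [i]).length) :
    ∃ m' b, m = m' ++ [b] ∧ m'.length = l.length := by
  have hne : m ≠ [] := by intro h'; subst h'; simp at h
  refine ⟨m.dropLast, m.getLast hne, (List.dropLast_append_getLast hne).symm, ?_⟩
  rw [List.length_dropLast]
  simp at h
  omega

lemma len_maskProd_le : ∀ (l : List ℕ) (m : List Bool), m.length = l.length →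
    len (maskProd (n := n) l m) ≤ m.count true := by
  intro l
  induction l using List.reverseRecOn with
  | nil =>
    intro m h
    have : m = [] := List.eq_nil_of_length_eq_zero (by simpa using h)
    subst this
    rw [maskProd_nil, len_one]
    exact Nat.zero_le _
  | append_singleton l i IH =>
    intro m h
    obtain ⟨m', b, rfl, hlen⟩ := mask_split h
    rw [maskProd_append hlen, maskProd_singleton, List.count_append]
    cases b
    · simpa using IH m' hlen
    · simp only [if_pos rfl]
      have h1 := len_mul_simpleRefl_le (maskProd (n := n) l m') i
      have h2 := IH m' hlen
      simp [List.count_cons]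
      omega

open Equiv Finset
variable {n : ℕ}

lemma take_append_left {α : Type*} (l1 l2 : List α) {j : ℕ} (h : j ≤ l1.length) :
    (l1 ++ l2).take j = l1.take j := by
  rw [List.take_append, Nat.sub_eq_zero_of_le h, List.take_zero, List.append_nil]

lemma isPDS_append {l : List ℕ} {i : ℕ} {m : List Bool} {b : Bool}
    (hlen : m.length = l.length) :
    IsPDS (n := n) (l ++ [i]) (m ++ [b]) ↔
      IsPDS (n := n) l m ∧
        len (maskProd (n := n) l m * simpleRefl i) = len (maskProd (n := n) l m) + 1 := by
  have htl : ∀ j : ℕ, j ≤ l.length → (l ++ [i]).take j = l.take j :=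
    fun j hj => take_append_left l [i] hj
  have htm : ∀ j : ℕ, j ≤ l.length → (m ++ [b]).take j = m.take j :=
    fun j hj => take_append_left m [b] (hlen ▸ hj)
  have hgd : ∀ j : ℕ, j < l.length → (l ++ [i]).getD j 0 = l.getD j 0 := by
    intro j hj
    rw [List.getD_eq_getElem?_getD, List.getD_eq_getElem?_getD, List.getElem?_append_left hj]
  have hgdl : (l ++ [i]).getD l.length 0 = i := by
    rw [List.getD_eq_getElem?_getD, List.getElem?_append_right (le_refl _)]
    simp
  constructor
  · rintro ⟨-, hcond⟩
    refine ⟨⟨hlen, fun j hj => ?_⟩, ?_⟩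
    · have := hcond j (by simp; omega)
      rwa [htl j hj.le, htm j hj.le, hgd j hj] at this
    · have := hcond l.length (by simp)
      rwa [htl l.length (le_refl _), htm l.length (le_refl _), List.take_length,
        List.take_of_length_le (le_of_eq hlen), hgdl] at this
  · rintro ⟨⟨-, hcond⟩, hlast⟩
    refine ⟨by simp [hlen], fun j hj => ?_⟩
    simp only [List.length_append, List.length_singleton] at hj
    rcases Nat.lt_or_ge j l.length with hj' | hj'
    · rw [htl j hj'.le, htm j hj'.le, hgd j hj']
      exact hcond j hj'
    · have hj2 : j = l.length := by omega
      subst hj2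
      rwa [htl _ (le_refl _), htm _ (le_refl _), List.take_length,
        List.take_of_length_le (le_of_eq hlen), hgdl]

lemma reduced_mask_of_le {l : List ℕ} {u w : Equiv.Perm (Fin n)}
    (hw : wordProd l = w) (hred : len w = l.length) (huw : BruhatLE u w) :
    ∃ m : List Bool, m.length = l.length ∧ maskProd (n := n) l m = u ∧
      m.count true = len u := by
  induction huw using Relation.ReflTransGen.head_induction_on with
  | refl =>
    exact ⟨List.replicate l.length true, by simp,
      by rw [← wordProd_eq_maskProd, hw], by simp [hred]⟩
  | @head x c hcov hle IH =>
    obtain ⟨m, hlenm, hprod, hcount⟩ := IH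
    obtain ⟨⟨i, j, hij, hyx⟩, hlencov⟩ := hcov
    have hxc : x = c * Equiv.swap i j := by
      rw [hyx, mul_assoc, Equiv.swap_mul_self, mul_one]
    obtain ⟨a, b, hab, hswap⟩ : ∃ a b : Fin n, a < b ∧ Equiv.swap i j = Equiv.swap a b := by
      rcases lt_or_gt_of_ne hij with h | h
      · exact ⟨i, j, h, rfl⟩
      · exact ⟨j, i, h, Equiv.swap_comm i j⟩
    have hflip : c b < c a := by
      apply lt_of_len_mul_swap_lt hab
      rw [← hswap, ← hxc]
      omega
    rw [← hprod] at hflip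
    obtain ⟨j', hj', hjt, hprod', hcount'⟩ := exchange l m hlenm a b hab hflip
    refine ⟨m.set j' false, by simp [hlenm], ?_, by omega⟩
    rw [← hprod', hprod, ← hswap, ← hxc]

lemma exists_PDS : ∀ (l : List ℕ), (∀ i ∈ l, i + 1 < n) →
    ∀ (u : Equiv.Perm (Fin n)) (m : List Bool),
    m.length = l.length → maskProd l m = u → m.count true = len u →
    ∃ p, IsPDS (n := n) l p ∧ maskProd l p = u := by
  intro l
  induction l using List.reverseRecOn with
  | nil =>
    intro _ u m hlen hprod hcount
    refine ⟨[], ⟨rfl, fun j hj => absurd hj (by simp)⟩, ?_⟩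
    rw [← hprod]
    have : m = [] := List.eq_nil_of_length_eq_zero (by simpa using hlen)
    subst this; rfl
  | append_singleton l i IH =>
    intro hvalid u m hlen hprod hcount
    have hvi : i + 1 < n := hvalid i (by simp)
    have hvalid' : ∀ j ∈ l, j + 1 < n := fun j hj => hvalid j (by simp [hj])
    obtain ⟨m', b, rfl, hlen'⟩ := mask_split hlen
    rw [maskProd_append hlen', maskProd_singleton] at hprod
    rw [List.count_append] at hcount
    simp only [List.count_cons, List.count_nil] at hcount
    have husu : u * simpleRefl i * simpleRefl i = u := by
      rw [mul_assoc, simpleRefl_mul_self, mul_one]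
    rcases len_mul_simpleRefl_cases u hvi with ⟨-, hup⟩ | ⟨-, hdown⟩
    · -- ascent: bit must be false
      cases b
      · simp only [Bool.false_eq_true, if_false, mul_one] at hprod
        obtain ⟨p, hp, hpprod⟩ := IH hvalid' u m' hlen' hprod (by simpa using hcount)
        refine ⟨p ++ [false], ?_, ?_⟩
        · rw [isPDS_append hp.1]
          exact ⟨hp, by rw [hpprod]; exact hup⟩
        · rw [maskProd_append hp.1, maskProd_singleton, if_neg Bool.false_ne_true, mul_one,
            hpprod]
      · exfalso
        simp only [if_true] at hprod
        have hv0u : maskProd (n := n) l m' = u * simpleRefl i := by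
          rw [← hprod, mul_assoc, simpleRefl_mul_self, mul_one]
        have h1 : len (maskProd (n := n) l m') ≤ m'.count true := len_maskProd_le l m' hlen'
        rw [hv0u] at h1
        simp at hcount
        omega
    · -- descent: construct reduced mask for u * simpleRefl i
      have hmask : ∃ m'' : List Bool, m''.length = l.length ∧
          maskProd (n := n) l m'' = u * simpleRefl i ∧
          m''.count true = len (u * simpleRefl i) := by
        cases b
        · simp only [Bool.false_eq_true, if_false, mul_one] at hprod
          have ha : (⟨i, Nat.lt_of_succ_lt hvi⟩ : Fin n) < ⟨i+1, hvi⟩ := by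
            simp [Fin.lt_def]
          have hflip : maskProd (n := n) l m' ⟨i+1, hvi⟩
              < maskProd (n := n) l m' ⟨i, Nat.lt_of_succ_lt hvi⟩ := by
            rw [hprod]
            apply lt_of_len_mul_swap_lt (u := u) ha
            rw [← simpleRefl_valid hvi]
            omega
          obtain ⟨j', hj', hjt, hprod', hcount'⟩ := exchange l m' hlen' _ _ ha hflip
          refine ⟨m'.set j' false, by simp [hlen'], ?_, ?_⟩
          · rw [← hprod', hprod, simpleRefl_valid hvi]
          · simp at hcount
            omega
        · simp only [if_true] at hprod
          refine ⟨m', hlen', by rw [← hprod, mul_assoc, simpleRefl_mul_self, mul_one], ?_⟩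
          simp at hcount
          omega
      obtain ⟨m'', hlen'', hprod'', hcount''⟩ := hmask
      obtain ⟨p, hp, hpprod⟩ := IH hvalid' (u * simpleRefl i) m'' hlen'' hprod'' hcount''
      refine ⟨p ++ [true], ?_, ?_⟩
      · rw [isPDS_append hp.1]
        refine ⟨hp, ?_⟩
        rw [hpprod, husu]
        omega
      · rw [maskProd_append hp.1, maskProd_singleton, if_pos rfl, hpprod, husu]

lemma PDS_unique : ∀ (l : List ℕ), (∀ i ∈ l, i + 1 < n) → ∀ (m1 m2 : List Bool),
    IsPDS (n := n) l m1 → IsPDS (n := n) l m2 →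
    maskProd (n := n) l m1 = maskProd (n := n) l m2 → m1 = m2 := by
  intro l
  induction l using List.reverseRecOn with
  | nil =>
    intro _ m1 m2 h1 h2 _
    have e1 : m1 = [] := List.eq_nil_of_length_eq_zero (by simpa using h1.1)
    have e2 : m2 = [] := List.eq_nil_of_length_eq_zero (by simpa using h2.1)
    rw [e1, e2]
  | append_singleton l i IH =>
    intro hvalid m1 m2 h1 h2 hprod
    have hvi : i + 1 < n := hvalid i (by simp)
    have hvalid' : ∀ j ∈ l, j + 1 < n := fun j hj => hvalid j (by simp [hj])
    obtain ⟨p1, b1, rfl, hl1⟩ := mask_split h1.1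
    obtain ⟨p2, b2, rfl, hl2⟩ := mask_split h2.1
    rw [isPDS_append hl1] at h1
    rw [isPDS_append hl2] at h2
    have hu1 : maskProd (n := n) (l ++ [i]) (p1 ++ [b1]) =
        maskProd l p1 * (if b1 then simpleRefl (n := n) i else 1) := by
      rw [maskProd_append hl1, maskProd_singleton]
    have hu2 : maskProd (n := n) (l ++ [i]) (p1 ++ [b1]) =
        maskProd l p2 * (if b2 then simpleRefl (n := n) i else 1) := by
      rw [hprod, maskProd_append hl2, maskProd_singleton]
    set u := maskProd (n := n) (l ++ [i]) (p1 ++ [b1]) with hu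
    have key : ∀ (p : List Bool) (b : Bool), p.length = l.length →
        len (maskProd (n := n) l p * simpleRefl i) = len (maskProd (n := n) l p) + 1 →
        u = maskProd l p * (if b then simpleRefl (n := n) i else 1) →
        (b = true ∧ maskProd (n := n) l p = u * simpleRefl i ∧
          len u = len (u * simpleRefl i) + 1) ∨
        (b = false ∧ maskProd (n := n) l p = u ∧
          len (u * simpleRefl i) = len u + 1) := by
      intro p b hpl hcond hueq
      cases b
      · simp only [Bool.false_eq_true, if_false, mul_one] at hueq
        exact Or.inr ⟨rfl, hueq.symm, by rw [hueq]; exact hcond⟩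
      · simp only [if_true] at hueq
        have hvp : u * simpleRefl i = maskProd (n := n) l p := by
          rw [hueq, mul_assoc, simpleRefl_mul_self, mul_one]
        refine Or.inl ⟨rfl, hvp.symm, ?_⟩
        rw [← hvp, mul_assoc, simpleRefl_mul_self, mul_one] at hcond
        omega
    rcases key p1 b1 hl1 h1.2 hu1 with ⟨hb1, hv1, hl1'⟩ | ⟨hb1, hv1, hl1'⟩ <;>
      rcases key p2 b2 hl2 h2.2 hu2 with ⟨hb2, hv2, hl2'⟩ | ⟨hb2, hv2, hl2'⟩
    · rw [IH hvalid' p1 p2 h1.1 h2.1 (hv1.trans hv2.symm), hb1, hb2]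
    · omega
    · omega
    · rw [IH hvalid' p1 p2 h1.1 h2.1 (hv1.trans hv2.symm), hb1, hb2]

end PDSAux

/-- Existence and uniqueness of the positive distinguished subexpression for
`u` in a reduced word for `w`, whenever `u ≤ w` in Bruhat order. -/


theorem existsUnique_PDS {n : ℕ} (l : List ℕ) (u w : Equiv.Perm (Fin n))
    (hvalid : ∀ i ∈ l, i + 1 < n) (hw : wordProd l = w) (hred : len w = l.length)
    (huw : BruhatLE u w) :
    ∃! m : List Bool, IsPDS (n := n) l m ∧ maskProd (n := n) l m = u := by
  
  obtain ⟨m, hlen, hprod, hcount⟩ := PDSAux.reduced_mask_of_le hw hred huw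
  obtain ⟨p, hPDS, hpprod⟩ := PDSAux.exists_PDS l hvalid u m hlen hprod hcount
  refine ⟨p, ⟨hPDS, hpprod⟩, ?_⟩
  rintro q ⟨hq1, hq2⟩
  exact PDSAux.PDS_unique l hvalid q p hq1 hPDS (hq2.trans hpprod.symm)
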